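/- Let ≻ be a linear order on ℚ^r making it a linearly ordered abelian group and refining the componentwise partial order (if w ∈ ℚ^r has all components ≥ 0 then w ⪰ 0; e.g. the lexicographic order). Let A_1,…,A_m ⊂ ℚ^r be finite nonempty sets, and for each i let β_i denote the ≻-minimum of A_i. Then there exists a vector v ∈ ℚ^r with all components ≥ 0 such that for every i and every α ∈ A_i with α ≻ β_i, the standard inner product satisfies v·(β_i − α) < 0. -/

import Mathlib

open Finset

section KD
variable {ι : Type} [Fintype ι]

lemma kernel_density (F : Finset (ι → ℚ)) :
    ∀ (x : ι → ℝ), (∀ f ∈ F, ∑ k, (f k : ℝ) * x k = 0) →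
    ∀ ε : ℝ, 0 < ε → ∃ q : ι → ℚ,
      (∀ f ∈ F, ∑ k, f k * q k = 0) ∧ ∀ k, |x k - (q k : ℝ)| < ε := by
  classical
  induction F using Finset.induction_on with
  | empty =>
      intro x _ ε hε
      have h : ∀ k, ∃ qk : ℚ, |x k - (qk : ℝ)| < ε := by
        intro k
        obtain ⟨q, hq1, hq2⟩ := exists_rat_btwn (show x k - ε < x k by linarith)
        exact ⟨q, by rw [abs_sub_lt_iff]; constructor <;> linarith⟩
      choose q hq using h
      exact ⟨q, by simp, hq⟩
  | @insert f F hfF ih =>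
      intro x hx ε hε
      by_cases hcase : ∀ q : ι → ℚ, (∀ g ∈ F, ∑ k, g k * q k = 0) → ∑ k, f k * q k = 0
      · obtain ⟨q, hq1, hq2⟩ := ih x (fun g hg => hx g (Finset.mem_insert_of_mem hg)) ε hε
        refine ⟨q, ?_, hq2⟩
        intro g hg
        rcases Finset.mem_insert.mp hg with rfl | hg
        · exact hcase q hq1
        · exact hq1 g hg
      · push_neg at hcase
        obtain ⟨q0, hq0, hc⟩ := hcase
        set c : ℚ := ∑ k, f k * q0 k with hcdef
        have hcR : |(c : ℝ)| ≠ 0 := by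
          simp only [ne_eq, abs_eq_zero, Rat.cast_eq_zero]
          exact hc
        have hcRpos : 0 < |(c : ℝ)| := lt_of_le_of_ne (abs_nonneg _) (Ne.symm hcR)
        set B : ℝ := (∑ k, |(f k : ℝ)|) * (∑ k, |(q0 k : ℝ)|) / |(c : ℝ)| with hB
        have hBnonneg : 0 ≤ B := by
          apply div_nonneg
          · exact mul_nonneg (Finset.sum_nonneg fun k _ => abs_nonneg _)
              (Finset.sum_nonneg fun k _ => abs_nonneg _)
          · exact abs_nonneg _
        have hδ : 0 < ε / (1 + B) := by positivity
        obtain ⟨p, hp1, hp2⟩ := ih x (fun g hg => hx g (Finset.mem_insert_of_mem hg)) _ hδ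
        set t : ℚ := (∑ k, f k * p k) / c with ht
        refine ⟨fun k => p k - t * q0 k, ?_, ?_⟩
        · intro g hg
          have expand : ∑ k, g k * (p k - t * q0 k)
              = (∑ k, g k * p k) - t * (∑ k, g k * q0 k) := by
            rw [Finset.mul_sum, ← Finset.sum_sub_distrib]
            congr 1; ext k; ring
          rcases Finset.mem_insert.mp hg with rfl | hg
          · rw [expand, ← hcdef, ht]
            field_simp
            ring
          · rw [expand, hp1 g hg, hq0 g hg, mul_zero, sub_zero]
        · intro k
          have hfx : ∑ k, (f k : ℝ) * x k = 0 := hx f (Finset.mem_insert_self f F)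
          -- bound on |t|
          have htbound : |(t : ℝ)| ≤ (ε / (1 + B)) * (∑ k, |(f k : ℝ)|) / |(c : ℝ)| := by
            have h1 : ((∑ k, f k * p k : ℚ) : ℝ) = ∑ k, (f k : ℝ) * (p k : ℝ) := by
              push_cast; ring_nf
            have h2 : |(∑ k, (f k : ℝ) * (p k : ℝ))|
                ≤ (ε / (1 + B)) * (∑ k, |(f k : ℝ)|) := by
              have hrw : ∑ k, (f k : ℝ) * (p k : ℝ)
                  = ∑ k, (f k : ℝ) * ((p k : ℝ) - x k) := by
                simp only [mul_sub, Finset.sum_sub_distrib, hfx, sub_zero]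
              rw [hrw]
              calc |∑ k, (f k : ℝ) * ((p k : ℝ) - x k)|
                  ≤ ∑ k, |(f k : ℝ) * ((p k : ℝ) - x k)| := Finset.abs_sum_le_sum_abs _ _
                _ ≤ ∑ k, |(f k : ℝ)| * (ε / (1 + B)) := by
                    apply Finset.sum_le_sum
                    intro k _
                    rw [abs_mul]
                    apply mul_le_mul_of_nonneg_left _ (abs_nonneg _)
                    rw [abs_sub_comm]
                    exact le_of_lt (hp2 k)
                _ = (ε / (1 + B)) * (∑ k, |(f k : ℝ)|) := by
                    rw [← Finset.sum_mul]; ring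
            have : (t : ℝ) = (∑ k, (f k : ℝ) * (p k : ℝ)) / (c : ℝ) := by
              rw [ht]; push_cast [h1]; ring
            rw [this, abs_div]
            gcongr
          have hq0k : |(q0 k : ℝ)| ≤ ∑ k, |(q0 k : ℝ)| :=
            Finset.single_le_sum (f := fun k => |(q0 k : ℝ)|) (fun k _ => abs_nonneg _) (Finset.mem_univ k)
          have key : |x k - ((p k : ℝ) - (t : ℝ) * (q0 k : ℝ))|
              ≤ |x k - (p k : ℝ)| + |(t : ℝ)| * |(q0 k : ℝ)| := by
            calc |x k - ((p k : ℝ) - (t : ℝ) * (q0 k : ℝ))|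
                = |(x k - (p k : ℝ)) + (t : ℝ) * (q0 k : ℝ)| := by congr 1; ring
              _ ≤ |x k - (p k : ℝ)| + |(t : ℝ) * (q0 k : ℝ)| := abs_add_le _ _
              _ = _ := by rw [abs_mul]
          have h3 : |(t : ℝ)| * |(q0 k : ℝ)| ≤ (ε / (1 + B)) * B := by
            calc |(t : ℝ)| * |(q0 k : ℝ)|
                ≤ ((ε / (1 + B)) * (∑ k, |(f k : ℝ)|) / |(c : ℝ)|) * (∑ k, |(q0 k : ℝ)|) :=
                  mul_le_mul htbound hq0k (abs_nonneg _) (by positivity)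
              _ = (ε / (1 + B)) * B := by rw [hB]; field_simp
          have hsum : (ε / (1 + B)) + (ε / (1 + B)) * B = ε := by
            field_simp
          have hcast : ((p k - t * q0 k : ℚ) : ℝ) = (p k : ℝ) - (t : ℝ) * (q0 k : ℝ) := by
            push_cast; ring
          have := hp2 k
          calc |x k - ((p k - t * q0 k : ℚ) : ℝ)|
              = |x k - ((p k : ℝ) - (t : ℝ) * (q0 k : ℝ))| := by rw [hcast]
            _ ≤ |x k - (p k : ℝ)| + |(t : ℝ)| * |(q0 k : ℝ)| := key
            _ < ε := by linarith

end KD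

section Core

variable {r : ℕ} {ι : Type} [Fintype ι]

/-- No real convex combination of the `w k` is componentwise nonnegative, given the
integral obstruction hypothesis. -/
lemma no_real_combo (w : ι → Fin r → ℚ)
    (hobs : ∀ c : ι → ℕ, (∀ j, 0 ≤ ∑ k, (c k : ℚ) * w k j) → ∀ k, c k = 0)
    (lam : ι → ℝ) (hlam0 : ∀ k, 0 ≤ lam k) (hlam1 : ∑ k, lam k = 1)
    (hge : ∀ j, 0 ≤ ∑ k, lam k * (w k j : ℝ)) : False := by
  classical
  set wR : ι → Fin r → ℝ := fun k j => (w k j : ℝ) with hwR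
  set T : (ι → ℝ) → Prop :=
    fun μ => (∀ k, 0 ≤ μ k) ∧ ∀ j, 0 ≤ ∑ k, μ k * wR k j with hT
  have hT0 : T 0 := ⟨fun k => le_refl 0, fun j => by simp⟩
  have hTadd : ∀ μ ν, T μ → T ν → T (μ + ν) := by
    rintro μ ν ⟨hμ1, hμ2⟩ ⟨hν1, hν2⟩
    refine ⟨fun k => add_nonneg (hμ1 k) (hν1 k), fun j => ?_⟩
    have : ∑ k, (μ + ν) k * wR k j = (∑ k, μ k * wR k j) + ∑ k, ν k * wR k j := by
      rw [← Finset.sum_add_distrib]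
      congr 1; ext k; simp [add_mul]
    rw [this]
    exact add_nonneg (hμ2 j) (hν2 j)
  have hTlam : T lam := ⟨hlam0, hge⟩
  set K : Set ι := {k | ∃ μ, T μ ∧ 0 < μ k} with hK
  set J : Set (Fin r) := {j | ∃ μ, T μ ∧ 0 < ∑ k, μ k * wR k j} with hJ
  -- witnesses
  set witK : ι → (ι → ℝ) := fun k => if h : k ∈ K then h.choose else 0 with hwitK
  set witJ : Fin r → (ι → ℝ) := fun j => if h : j ∈ J then h.choose else 0 with hwitJ
  have hwitKT : ∀ k, T (witK k) := by
    intro k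
    by_cases h : k ∈ K
    · simp only [hwitK, dif_pos h]; exact h.choose_spec.1
    · simp only [hwitK, dif_neg h]; exact hT0
  have hwitJT : ∀ j, T (witJ j) := by
    intro j
    by_cases h : j ∈ J
    · simp only [hwitJ, dif_pos h]; exact h.choose_spec.1
    · simp only [hwitJ, dif_neg h]; exact hT0
  have hTsum : ∀ {α : Type} [Fintype α] (g : α → (ι → ℝ)), (∀ a, T (g a)) →
      T (∑ a, g a) := by
    intro α _ g hg
    exact Finset.sum_induction g T (fun a b => hTadd a b) hT0 (fun a _ => hg a)
  set μs : ι → ℝ := lam + (∑ k, witK k) + (∑ j, witJ j) with hμs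
  have hTμs : T μs :=
    hTadd _ _ (hTadd _ _ hTlam (hTsum _ hwitKT)) (hTsum _ hwitJT)
  -- value of μs at a point
  have hμs_apply : ∀ k, μs k = lam k + (∑ k', witK k' k) + (∑ j, witJ j k) := by
    intro k; simp [hμs, Finset.sum_apply]
  have hKpos : ∀ k ∈ K, 0 < μs k := by
    intro k hk
    have h1 : witK k k ≤ ∑ k', witK k' k :=
      Finset.single_le_sum (f := fun k' => witK k' k)
        (fun k' _ => (hwitKT k').1 k) (Finset.mem_univ k)
    have h2 : 0 < witK k k := by
      simp only [hwitK, dif_pos hk]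
      exact hk.choose_spec.2
    have h3 : 0 ≤ ∑ j, witJ j k :=
      Finset.sum_nonneg fun j _ => (hwitJT j).1 k
    have := hlam0 k
    rw [hμs_apply k]
    linarith
  have hKzero : ∀ k, k ∉ K → μs k = 0 := by
    intro k hk
    by_contra h
    have hpos : 0 < μs k := lt_of_le_of_ne (hTμs.1 k) (Ne.symm h)
    exact hk ⟨μs, hTμs, hpos⟩
  -- the linear functional L j
  set L : Fin r → (ι → ℝ) → ℝ := fun j μ => ∑ k, μ k * wR k j with hL
  have hLadd : ∀ j μ ν, L j (μ + ν) = L j μ + L j ν := by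
    intro j μ ν
    simp only [hL, ← Finset.sum_add_distrib]
    congr 1; ext k; simp [add_mul]
  have hLsum : ∀ {α : Type} [Fintype α] (j) (g : α → (ι → ℝ)),
      L j (∑ a, g a) = ∑ a, L j (g a) := by
    intro α _ j g
    simp only [hL, Finset.sum_apply, Finset.sum_mul]
    exact Finset.sum_comm
  have hJpos : ∀ j ∈ J, 0 < L j μs := by
    intro j hj
    have hexp : L j μs = L j lam + (∑ k, L j (witK k)) + (∑ j', L j (witJ j')) := by
      rw [hμs, hLadd, hLadd, hLsum, hLsum]
    have h1 : L j (witJ j) ≤ ∑ j', L j (witJ j') :=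
      Finset.single_le_sum (f := fun j' => L j (witJ j'))
        (fun j' _ => (hwitJT j').2 j) (Finset.mem_univ j)
    have h2 : 0 < L j (witJ j) := by
      simp only [hwitJ, dif_pos hj]
      exact hj.choose_spec.2
    have h3 : 0 ≤ ∑ k, L j (witK k) :=
      Finset.sum_nonneg fun k _ => (hwitKT k).2 j
    have h4 : 0 ≤ L j lam := hTlam.2 j
    rw [hexp]
    linarith
  have hJzero : ∀ j, j ∉ J → L j μs = 0 := by
    intro j hj
    by_contra h
    have hpos : 0 < L j μs := lt_of_le_of_ne (hTμs.2 j) (Ne.symm h)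
    exact hj ⟨μs, hTμs, hpos⟩
  -- K is nonempty
  obtain ⟨k0, hk0⟩ : ∃ k0, 0 < lam k0 := by
    by_contra h
    push_neg at h
    have : ∀ k ∈ Finset.univ, lam k = 0 :=
      fun k _ => le_antisymm (h k) (hlam0 k)
    rw [Finset.sum_congr rfl this] at hlam1
    simp at hlam1
  have hk0K : k0 ∈ K := ⟨lam, hTlam, hk0⟩
  -- equation system
  set F : Finset (ι → ℚ) :=
    ((Finset.univ.filter (fun k => k ∉ K)).image fun k0 => (Pi.single k0 1 : ι → ℚ)) ∪
    ((Finset.univ.filter (fun j => j ∉ J)).image fun j => fun k => w k j) with hF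
  have hμsF : ∀ f ∈ F, ∑ k, (f k : ℝ) * μs k = 0 := by
    intro f hf
    rcases Finset.mem_union.mp hf with hf | hf
    · obtain ⟨k1, hk1, rfl⟩ := Finset.mem_image.mp hf
      rw [Finset.mem_filter] at hk1
      have : ∀ k, ((Pi.single k1 (1:ℚ) : ι → ℚ) k : ℝ) * μs k
          = if k = k1 then μs k else 0 := by
        intro k
        by_cases h : k = k1 <;> simp [Pi.single_apply, h]
      rw [Finset.sum_congr rfl (fun k _ => this k), Finset.sum_ite_eq' Finset.univ k1]
      simp [hKzero k1 hk1.2]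
    · obtain ⟨j, hj, rfl⟩ := Finset.mem_image.mp hf
      rw [Finset.mem_filter] at hj
      have := hJzero j hj.2
      simp only [hL] at this
      rw [← this]
      congr 1; ext k; ring
  -- epsilon
  set Pset : Finset ℝ := insert 1
    (((Finset.univ.filter (fun k => k ∈ K)).image fun k => μs k) ∪
     ((Finset.univ.filter (fun j => j ∈ J)).image fun j =>
        L j μs / (1 + ∑ k, |wR k j|))) with hPset
  have hPne : Pset.Nonempty := ⟨1, Finset.mem_insert_self _ _⟩
  set ε : ℝ := Pset.min' hPne with hε
  have hεpos : 0 < ε := by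
    rw [hε, Finset.lt_min'_iff]
    intro y hy
    rcases Finset.mem_insert.mp hy with rfl | hy
    · norm_num
    rcases Finset.mem_union.mp hy with hy | hy
    · obtain ⟨k, hk, rfl⟩ := Finset.mem_image.mp hy
      rw [Finset.mem_filter] at hk
      exact hKpos k hk.2
    · obtain ⟨j, hj, rfl⟩ := Finset.mem_image.mp hy
      rw [Finset.mem_filter] at hj
      apply div_pos (hJpos j hj.2)
      have : 0 ≤ ∑ k, |wR k j| := Finset.sum_nonneg fun k _ => abs_nonneg _
      linarith
  -- apply density
  obtain ⟨q, hq1, hq2⟩ := kernel_density F μs hμsF ε hεpos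
  -- q is nonnegative
  have hqK : ∀ k ∈ K, 0 < q k := by
    intro k hk
    have hmem : μs k ∈ Pset := by
      apply Finset.mem_insert_of_mem
      apply Finset.mem_union_left
      exact Finset.mem_image.mpr ⟨k, Finset.mem_filter.mpr ⟨Finset.mem_univ _, hk⟩, rfl⟩
    have hle : ε ≤ μs k := Finset.min'_le _ _ hmem
    have := hq2 k
    rw [abs_sub_lt_iff] at this
    have : μs k - (q k : ℝ) < μs k := lt_of_lt_of_le this.1 hle
    have : (0:ℝ) < q k := by linarith
    exact_mod_cast this
  have hqK0 : ∀ k, k ∉ K → q k = 0 := by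
    intro k hk
    have hmem : (Pi.single k 1 : ι → ℚ) ∈ F := by
      apply Finset.mem_union_left
      exact Finset.mem_image.mpr ⟨k, Finset.mem_filter.mpr ⟨Finset.mem_univ _, hk⟩, rfl⟩
    have := hq1 _ hmem
    have hexp : ∑ k', (Pi.single k (1:ℚ) : ι → ℚ) k' * q k' = q k := by
      have : ∀ k', (Pi.single k (1:ℚ) : ι → ℚ) k' * q k'
          = if k' = k then q k' else 0 := by
        intro k'
        by_cases h : k' = k <;> simp [Pi.single_apply, h]
      rw [Finset.sum_congr rfl (fun k' _ => this k'), Finset.sum_ite_eq' Finset.univ k]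
      simp
    rw [hexp] at this
    exact this
  have hq0 : ∀ k, 0 ≤ q k := by
    intro k
    by_cases h : k ∈ K
    · exact le_of_lt (hqK k h)
    · rw [hqK0 k h]
  -- componentwise nonnegativity of the combination
  have hqW : ∀ j, 0 ≤ ∑ k, q k * w k j := by
    intro j
    by_cases hj : j ∈ J
    · -- real estimate
      have hmem : L j μs / (1 + ∑ k, |wR k j|) ∈ Pset := by
        apply Finset.mem_insert_of_mem
        apply Finset.mem_union_right
        exact Finset.mem_image.mpr ⟨j, Finset.mem_filter.mpr ⟨Finset.mem_univ _, hj⟩, rfl⟩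
      have hle : ε ≤ L j μs / (1 + ∑ k, |wR k j|) := Finset.min'_le _ _ hmem
      have hden : (0:ℝ) < 1 + ∑ k, |wR k j| := by
        have : 0 ≤ ∑ k, |wR k j| := Finset.sum_nonneg fun k _ => abs_nonneg _
        linarith
      have hdiff : |∑ k, (q k : ℝ) * wR k j - L j μs| ≤ ε * ∑ k, |wR k j| := by
        have : ∑ k, (q k : ℝ) * wR k j - L j μs
            = ∑ k, ((q k : ℝ) - μs k) * wR k j := by
          simp only [hL, ← Finset.sum_sub_distrib]
          congr 1; ext k; ring
        rw [this]
        calc |∑ k, ((q k : ℝ) - μs k) * wR k j|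
            ≤ ∑ k, |((q k : ℝ) - μs k) * wR k j| := Finset.abs_sum_le_sum_abs _ _
          _ ≤ ∑ k, ε * |wR k j| := by
              apply Finset.sum_le_sum
              intro k _
              rw [abs_mul]
              apply mul_le_mul_of_nonneg_right _ (abs_nonneg _)
              rw [abs_sub_comm]
              exact le_of_lt (hq2 k)
          _ = ε * ∑ k, |wR k j| := by rw [Finset.mul_sum]
      have hεs : ε * ∑ k, |wR k j| < L j μs := by
        have h1 : ε * (1 + ∑ k, |wR k j|) ≤ L j μs := by
          rw [← div_mul_cancel₀ (L j μs) (ne_of_gt hden)]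
          exact mul_le_mul_of_nonneg_right hle (le_of_lt hden)
        nlinarith [hεpos]
      have : 0 < ∑ k, (q k : ℝ) * wR k j := by
        have h5 : -(ε * ∑ k, |wR k j|) ≤ ∑ k, (q k : ℝ) * wR k j - L j μs := by
          have := neg_abs_le (∑ k, (q k : ℝ) * wR k j - L j μs)
          linarith [hdiff]
        linarith [hεs]
      have hcast : ((∑ k, q k * w k j : ℚ) : ℝ) = ∑ k, (q k : ℝ) * wR k j := by
        simp only [hwR]; push_cast; rfl
      have : (0:ℝ) < ((∑ k, q k * w k j : ℚ) : ℝ) := by rw [hcast]; exact this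
      exact_mod_cast le_of_lt this
    · -- exact equation
      have hmem : (fun k => w k j) ∈ F := by
        apply Finset.mem_union_right
        exact Finset.mem_image.mpr ⟨j, Finset.mem_filter.mpr ⟨Finset.mem_univ _, hj⟩, rfl⟩
      have := hq1 _ hmem
      have : ∑ k, q k * w k j = 0 := by
        rw [← this]; congr 1; ext k; ring
      rw [this]
  -- clear denominators
  set N : ℕ := ∏ k, (q k).den with hN
  have hNpos : 0 < N := Finset.prod_pos fun k _ => (q k).pos
  have hNden : ∀ k, (q k).den ∣ N := fun k => Finset.dvd_prod_of_mem _ (Finset.mem_univ k)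
  set n : ι → ℕ := fun k => ((N / (q k).den : ℕ) * (q k).num).toNat with hn
  have hnq : ∀ k, (n k : ℚ) = (N : ℚ) * q k := by
    intro k
    have hd : ((q k).den : ℚ) * q k = ((q k).num : ℚ) := by
      have hdne : ((q k).den : ℚ) ≠ 0 := by
        exact_mod_cast (q k).den_ne_zero
      have h := Rat.num_div_den (q k)
      rw [div_eq_iff hdne] at h
      rw [h]; ring
    have hmul : (N : ℚ) = ((N / (q k).den : ℕ) : ℚ) * ((q k).den : ℚ) := by
      rw [← Nat.cast_mul, Nat.div_mul_cancel (hNden k)]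
    have hnum0 : 0 ≤ (q k).num := Rat.num_nonneg.mpr (hq0 k)
    have hto : (((N / (q k).den : ℕ) * (q k).num).toNat : ℤ)
        = ((N / (q k).den : ℕ) : ℤ) * (q k).num :=
      Int.toNat_of_nonneg (mul_nonneg (Int.natCast_nonneg _) hnum0)
    have hstep : (n k : ℚ) = ((N / (q k).den : ℕ) : ℚ) * ((q k).num : ℚ) := by
      have h := congrArg (fun z : ℤ => (z : ℚ)) hto
      simp only [Int.cast_mul, Int.cast_natCast] at h
      simpa [hn] using h
    rw [hstep, hmul, mul_assoc, hd]
  have hobsn : ∀ j, 0 ≤ ∑ k, (n k : ℚ) * w k j := by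
    intro j
    have : ∑ k, (n k : ℚ) * w k j = (N : ℚ) * ∑ k, q k * w k j := by
      rw [Finset.mul_sum]
      congr 1; ext k; rw [hnq k]; ring
    rw [this]
    exact mul_nonneg (by positivity) (hqW j)
  have hzero := hobs n hobsn k0
  have : (n k0 : ℚ) = 0 := by rw [hzero]; norm_num
  rw [hnq k0] at this
  have hqk0 : 0 < q k0 := hqK k0 hk0K
  have hNQ : 0 < (N : ℚ) := by exact_mod_cast hNpos
  nlinarith



lemma core_weight (w : ι → Fin r → ℚ)
    (hobs : ∀ c : ι → ℕ, (∀ j, 0 ≤ ∑ k, (c k : ℚ) * w k j) → ∀ k, c k = 0) :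
    ∃ v : Fin r → ℚ, (∀ j, 0 ≤ v j) ∧ ∀ k, ∑ j, v j * w k j < 0 := by
  classical
  cases isEmpty_or_nonempty ι with
  | inl h => exact ⟨0, fun j => le_refl 0, fun k => (h.elim k)⟩
  | inr hne =>
    set wR : ι → (Fin r → ℝ) := fun k j => (w k j : ℝ) with hwR
    set O : Set (Fin r → ℝ) := {x | ∀ j, 0 ≤ x j} with hO
    have hOconv : Convex ℝ O := by
      intro x hx y hy a b ha hb hab
      intro j
      exact add_nonneg (mul_nonneg ha (hx j)) (mul_nonneg hb (hy j))
    have hOclosed : IsClosed O := by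
      have : O = ⋂ j, {x : Fin r → ℝ | 0 ≤ x j} := by
        ext x; simp [hO, Set.mem_iInter]
      rw [this]
      exact isClosed_iInter fun j => isClosed_le continuous_const (continuous_apply j)
    have hsconv : Convex ℝ (convexHull ℝ (Set.range wR)) := convex_convexHull _ _
    have hscpt : IsCompact (convexHull ℝ (Set.range wR)) :=
      (Set.finite_range wR).isCompact_convexHull ℝ
    have hdisj : Disjoint (convexHull ℝ (Set.range wR)) O := by
      rw [Set.disjoint_left]
      intro x hx hxO
      rw [convexHull_range_eq_exists_affineCombination] at hx
      obtain ⟨s, lam, hlam0, hlam1, hlamx⟩ := hx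
      set lam' : ι → ℝ := fun k => if k ∈ s then lam k else 0 with hlam'
      have h0 : ∀ k, 0 ≤ lam' k := by
        intro k
        by_cases h : k ∈ s <;> simp [hlam', h]
        exact hlam0 k h
      have h1 : ∑ k, lam' k = 1 := by
        rw [← hlam1]
        simp only [hlam']
        rw [Finset.sum_ite_mem, Finset.univ_inter]
      have hcomb : x = ∑ k, lam' k • wR k := by
        rw [← hlamx, Finset.affineCombination_eq_linear_combination _ _ _ hlam1]
        simp only [hlam']
        rw [eq_comm]
        rw [Finset.sum_congr rfl (fun k (_ : k ∈ Finset.univ) => by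
          rw [ite_smul, zero_smul] : ∀ k ∈ Finset.univ,
            (if k ∈ s then lam k else 0) • wR k = if k ∈ s then lam k • wR k else 0)]
        rw [Finset.sum_ite_mem, Finset.univ_inter]
      exact no_real_combo w hobs lam' h0 h1 (fun j => by
        have : x j = ∑ k, lam' k * wR k j := by
          rw [hcomb]; simp [Finset.sum_apply]
        rw [← this]; exact hxO j)
    obtain ⟨f, u, v, hfs, huv, hft⟩ :=
      geometric_hahn_banach_compact_closed hsconv hscpt hOconv hOclosed hdisj
    have h0O : (0 : Fin r → ℝ) ∈ O := fun j => le_refl 0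
    have hv0 : v < 0 := by
      have := hft 0 h0O
      simpa using this
    have hu0 : u < 0 := lt_trans huv hv0
    set V : Fin r → ℝ := fun j => f (fun j' => if j = j' then 1 else 0) with hV
    have hVdec : ∀ x : Fin r → ℝ, f x = ∑ j, x j * V j := by
      intro x
      have := LinearMap.pi_apply_eq_sum_univ (f : (Fin r → ℝ) →ₗ[ℝ] ℝ) x
      simpa [hV, smul_eq_mul] using this
    have hV0 : ∀ j, 0 ≤ V j := by
      intro j
      by_contra h
      push_neg at h
      set b : Fin r → ℝ := (v / V j) • ((fun j' => if j = j' then 1 else 0) : Fin r → ℝ) with hb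
      have hbO : b ∈ O := by
        intro j'
        simp only [hb, Pi.smul_apply, smul_eq_mul]
        have hdiv : 0 < v / V j := div_pos_of_neg_of_neg hv0 h
        by_cases hj : j = j'
        · subst hj; simp; linarith
        · simp [hj]
      have hfb : f b = v := by
        rw [hb, map_smul]
        have hVj : f (fun j' => if j = j' then 1 else 0) = V j := rfl
        simp only [smul_eq_mul, hVj]
        exact div_mul_cancel₀ v (ne_of_lt h)
      have := hft b hbO
      rw [hfb] at this
      exact lt_irrefl v this
    have hfw : ∀ k, ∑ j, wR k j * V j < u := by
      intro k
      have := hfs (wR k) (subset_convexHull ℝ _ (Set.mem_range_self k))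
      rwa [hVdec (wR k)] at this
    set M : ℝ := 1 + ∑ k, ∑ j, |wR k j| with hM
    have hM1 : (1:ℝ) ≤ M := by
      have : 0 ≤ ∑ k, ∑ j, |wR k j| :=
        Finset.sum_nonneg fun k _ => Finset.sum_nonneg fun j _ => abs_nonneg _
      linarith
    have hMpos : 0 < M := lt_of_lt_of_le one_pos hM1
    set δ : ℝ := (-u) / M with hδ
    have hδpos : 0 < δ := div_pos (by linarith) hMpos
    have hq : ∀ j, ∃ qj : ℚ, V j < qj ∧ (qj : ℝ) < V j + δ := by
      intro j
      obtain ⟨qj, h1, h2⟩ := exists_rat_btwn (show V j < V j + δ by linarith)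
      exact ⟨qj, h1, h2⟩
    choose q hq1 hq2 using hq
    refine ⟨q, ?_, ?_⟩
    · intro j
      have : (0:ℝ) < q j := lt_of_le_of_lt (hV0 j) (hq1 j)
      exact_mod_cast le_of_lt this
    · intro k
      have hbound : ∑ j, ((q j : ℝ) - V j) * wR k j ≤ δ * ∑ j, |wR k j| := by
        rw [Finset.mul_sum]
        apply Finset.sum_le_sum
        intro j _
        calc ((q j : ℝ) - V j) * wR k j ≤ |((q j : ℝ) - V j) * wR k j| := le_abs_self _
          _ = |(q j : ℝ) - V j| * |wR k j| := abs_mul _ _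
          _ ≤ δ * |wR k j| := by
              apply mul_le_mul_of_nonneg_right _ (abs_nonneg _)
              rw [abs_of_pos (by linarith [hq1 j] : (0:ℝ) < (q j : ℝ) - V j)]
              linarith [hq2 j]
      have hsumabs : ∑ j, |wR k j| ≤ M - 1 := by
        rw [hM]
        have : ∑ j, |wR k j| ≤ ∑ k', ∑ j, |wR k' j| :=
          Finset.single_le_sum (f := fun k' => ∑ j, |wR k' j|)
            (fun k' _ => Finset.sum_nonneg fun j _ => abs_nonneg _) (Finset.mem_univ k)
        linarith
      have hreal : ∑ j, (q j : ℝ) * wR k j < 0 := by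
        have hsplit : ∑ j, (q j : ℝ) * wR k j
            = (∑ j, wR k j * V j) + ∑ j, ((q j : ℝ) - V j) * wR k j := by
          rw [← Finset.sum_add_distrib]
          congr 1; ext j; ring
        have hδM : δ * M = -u := by
          rw [hδ]; field_simp
        have h2 : δ * ∑ j, |wR k j| ≤ δ * (M - 1) :=
          mul_le_mul_of_nonneg_left hsumabs (le_of_lt hδpos)
        have := hfw k
        rw [hsplit]
        nlinarith
      have hcast : ((∑ j, q j * w k j : ℚ) : ℝ) = ∑ j, (q j : ℝ) * wR k j := by
        simp only [hwR]; push_cast; rfl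
      have : ((∑ j, q j * w k j : ℚ) : ℝ) < 0 := by rw [hcast]; exact hreal
      exact_mod_cast this

end Core

/-- **Existence of a compatible nonnegative linear functional** (Lemma `lem-weight-approx`).
Let `≻` be a linear order making `ℚ^r` a linearly ordered abelian group which refines the
componentwise partial order (encoded by a linearly ordered abelian group `Γ` with an additive
isomorphism `e : Γ ≃+ ℚ^r` such that `γ ⪰ 0` whenever all components of `e γ` are `≥ 0`).
Given finite nonempty sets `A_1, …, A_m ⊂ ℚ^r` with ≻-minima `β_1, …, β_m`, there is a
componentwise nonnegative `v ∈ ℚ^r` with `v · (β_i − α) < 0` whenever `α ∈ A_i`, `α ≻ β_i`. -/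
theorem stmt_9 {r : ℕ} {Γ : Type} [AddCommGroup Γ] [LinearOrder Γ] [IsOrderedAddMonoid Γ]
    (e : Γ ≃+ (Fin r → ℚ))
    (href : ∀ γ : Γ, (∀ j, 0 ≤ e γ j) → 0 ≤ γ)
    {m : ℕ} (A : Fin m → Finset Γ) (hA : ∀ i, (A i).Nonempty)
    (β : Fin m → Γ) (hβ : ∀ i, β i ∈ A i ∧ ∀ a ∈ A i, β i ≤ a) :
    ∃ v : Fin r → ℚ, (∀ j, 0 ≤ v j) ∧
      ∀ i, ∀ a ∈ A i, β i < a → (∑ j, v j * (e (β i) j - e a j)) < 0 := by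
  classical
  set S : Finset Γ := Finset.univ.biUnion
    (fun i => ((A i).filter (fun a => β i < a)).image (fun a => β i - a)) with hS
  have hSneg : ∀ γ ∈ S, γ < 0 := by
    intro γ hγ
    rw [hS, Finset.mem_biUnion] at hγ
    obtain ⟨i, _, hγ⟩ := hγ
    obtain ⟨a, ha, rfl⟩ := Finset.mem_image.mp hγ
    rw [Finset.mem_filter] at ha
    exact sub_neg.mpr ha.2
  set w : {γ // γ ∈ S} → Fin r → ℚ := fun γ => e γ.1 with hw
  have hobs : ∀ c : {γ // γ ∈ S} → ℕ,
      (∀ j, 0 ≤ ∑ k, (c k : ℚ) * w k j) → ∀ k, c k = 0 := by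
    intro c hc
    by_contra h
    push_neg at h
    obtain ⟨k0, hk0⟩ := h
    set δ : Γ := ∑ k, c k • (k : {γ // γ ∈ S}).1 with hδ
    have heδ : ∀ j, e δ j = ∑ k, (c k : ℚ) * w k j := by
      intro j
      rw [hδ, map_sum, Finset.sum_apply]
      congr 1
      ext k
      rw [map_nsmul]
      simp [hw, nsmul_eq_mul]
    have hδ0 : 0 ≤ δ := href δ (fun j => by rw [heδ j]; exact hc j)
    have hδneg : δ < 0 := by
      rw [hδ]
      have hsum : ∑ k : {γ // γ ∈ S}, c k • (k : {γ // γ ∈ S}).1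
          < ∑ _k : {γ // γ ∈ S}, (0 : Γ) := by
        apply Finset.sum_lt_sum
        · intro k _
          have hkneg : (k : {γ // γ ∈ S}).1 ≤ 0 := le_of_lt (hSneg k.1 k.2)
          calc c k • (k : {γ // γ ∈ S}).1 ≤ c k • (0 : Γ) :=
                smul_le_smul_of_nonneg_left hkneg (Nat.zero_le _)
            _ = 0 := smul_zero _
        · refine ⟨k0, Finset.mem_univ _, ?_⟩
          have hkneg : (0:Γ) < -(k0 : {γ // γ ∈ S}).1 :=
            neg_pos.mpr (hSneg k0.1 k0.2)
          have := nsmul_pos hkneg hk0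
          rw [smul_neg] at this
          exact neg_pos.mp this
      rw [Finset.sum_const, smul_zero] at hsum
      exact hsum
    exact absurd hδ0 (not_le.mpr hδneg)
  obtain ⟨v, hv0, hv⟩ := core_weight w hobs
  refine ⟨v, hv0, ?_⟩
  intro i a ha hlt
  have hmem : β i - a ∈ S := by
    rw [hS, Finset.mem_biUnion]
    exact ⟨i, Finset.mem_univ _,
      Finset.mem_image.mpr ⟨a, Finset.mem_filter.mpr ⟨ha, hlt⟩, rfl⟩⟩
  have := hv ⟨β i - a, hmem⟩
  have hrw : ∀ j, w ⟨β i - a, hmem⟩ j = e (β i) j - e a j := by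
    intro j
    simp [hw, map_sub]
  calc ∑ j, v j * (e (β i) j - e a j)
      = ∑ j, v j * w ⟨β i - a, hmem⟩ j := by
        congr 1; ext j; rw [hrw j]
    _ < 0 := this
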